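/- For all β₀ > 0 and γ₀ ∈ ℝ, the set { s ∈ ℝ : s I₀(s) = (γ₀ + β₀ s²) I₁(s) } is finite. (Consequently the linearised operator K has only finitely many purely imaginary eigenvalues.) -/

import Mathlib

open Filter Topology Set
open scoped Nat

noncomputable section

/-- The modified Bessel function of the first kind `I_n`, as a power series. -/
def besselI (n : ℕ) (x : ℝ) : ℝ :=
  ∑' k : ℕ, (x / 2) ^ (2 * k + n) / ((k ! : ℝ) * ((k + n)! : ℝ))

namespace DispersionAux

/-- coefficient of the full series -/
def dj (β₀ γ₀ : ℝ) (j : ℕ) : ℝ := (2 - 4*β₀*j - γ₀/(j+1)) / ((j ! : ℝ))^2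

lemma summable_bound (a : ℕ → ℝ) (A B t : ℝ) (hA : 0 ≤ A) (hB : 0 ≤ B)
    (h : ∀ j, |a j| ≤ (A + B*j)/((j ! : ℝ))^2) :
    Summable (fun j => a j * t^(2*j+1)) := by
  apply Summable.of_abs
  have base : Summable (fun j : ℕ => ((A+B)*|t|) * ((2*t^2)^j / (j ! : ℝ))) :=
    (Real.summable_pow_div_factorial (2*t^2)).mul_left _
  refine base.of_nonneg_of_le (fun j => abs_nonneg _) (fun j => ?_)
  have hfac : (1:ℝ) ≤ (j ! : ℝ) := by exact_mod_cast Nat.one_le_iff_ne_zero.mpr j.factorial_ne_zero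
  have hfacpos : (0:ℝ) < (j ! : ℝ) := by linarith
  have h2 : (j:ℝ) + 1 ≤ 2^j := by exact_mod_cast Nat.lt_two_pow_self (n := j)
  have hnum : A + B*j ≤ (A+B) * 2^j := by nlinarith [pow_pos (two_pos (α := ℝ)) j]
  have hco : (A + B*j)/((j ! : ℝ))^2 ≤ ((A+B) * 2^j)/(j ! : ℝ) := by
    apply div_le_div₀ (by positivity) hnum hfacpos
    nlinarith
  have habs : |a j * t^(2*j+1)| ≤ (A + B*j)/((j ! : ℝ))^2 * |t|^(2*j+1) := by
    rw [abs_mul, abs_pow]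
    exact mul_le_mul_of_nonneg_right (h j) (by positivity)
  refine habs.trans ?_
  have ht : |t|^(2*j+1) = (t^2)^j * |t| := by
    rw [pow_succ, pow_mul, sq_abs]
  rw [ht, mul_pow]
  calc (A + B*j)/((j ! : ℝ))^2 * ((t^2)^j * |t|)
      ≤ ((A+B) * 2^j)/(j ! : ℝ) * ((t^2)^j * |t|) := by
        exact mul_le_mul_of_nonneg_right hco (by positivity)
    _ = (A+B)*|t| * (2^j * (t^2)^j / (j ! : ℝ)) := by ring

lemma abs_dj_le (β₀ γ₀ : ℝ) (j : ℕ) :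
    |dj β₀ γ₀ j| ≤ ((2 + |γ₀|) + (4*|β₀|)*j)/((j ! : ℝ))^2 := by
  have hfacpos : (0:ℝ) < ((j ! : ℝ))^2 := by positivity
  have hj1 : (1:ℝ) ≤ (j:ℝ) + 1 := by
    have := Nat.cast_nonneg (α := ℝ) j; linarith
  have h1 : |γ₀/((j:ℝ)+1)| ≤ |γ₀| := by
    rw [abs_div, abs_of_pos (by positivity : (0:ℝ) < (j:ℝ)+1)]
    exact div_le_self (abs_nonneg _) hj1
  rw [dj, abs_div, abs_of_pos hfacpos]
  gcongr
  refine abs_le.mpr ⟨?_, ?_⟩ <;>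
    nlinarith [le_abs_self γ₀, neg_abs_le γ₀, le_abs_self (γ₀/((j:ℝ)+1)),
      neg_abs_le (γ₀/((j:ℝ)+1)), le_abs_self β₀, neg_abs_le β₀, Nat.cast_nonneg (α := ℝ) j]


lemma summable_dj (β₀ γ₀ t : ℝ) : Summable (fun j => dj β₀ γ₀ j * t^(2*j+1)) := by
  refine summable_bound _ (2 + |γ₀|) (4*|β₀|) t (by positivity) (by positivity) ?_
  exact abs_dj_le β₀ γ₀

lemma ej_summable (β₀ t : ℝ) : Summable (fun j : ℕ => (4*β₀*j/((j ! : ℝ))^2) * t^(2*j+1)) := by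
  refine summable_bound _ 0 (4*|β₀|) t le_rfl (by positivity) (fun j => ?_)
  rw [abs_div, abs_of_pos (by positivity : (0:ℝ) < ((j ! :ℝ))^2)]
  gcongr
  rw [abs_mul, abs_mul]
  simp [abs_of_nonneg (Nat.cast_nonneg (α := ℝ) j)]

lemma besselI_summable (n : ℕ) (s : ℝ) :
    Summable (fun k : ℕ => (s / 2) ^ (2 * k + n) / ((k ! : ℝ) * ((k + n)! : ℝ))) := by
  apply Summable.of_abs
  have base : Summable (fun k : ℕ => |s/2|^n * (((s/2)^2)^k / (k ! : ℝ))) :=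
    (Real.summable_pow_div_factorial ((s/2)^2)).mul_left _
  refine base.of_nonneg_of_le (fun k => abs_nonneg _) (fun k => ?_)
  have h1 : (1:ℝ) ≤ ((k+n)! : ℝ) := by
    exact_mod_cast Nat.one_le_iff_ne_zero.mpr (k+n).factorial_ne_zero
  have h2 : (1:ℝ) ≤ (k ! : ℝ) := by
    exact_mod_cast Nat.one_le_iff_ne_zero.mpr k.factorial_ne_zero
  rw [abs_div, abs_mul, abs_pow, abs_of_pos (by positivity : (0:ℝ) < (k ! : ℝ)),
    abs_of_pos (by positivity : (0:ℝ) < ((k+n)! : ℝ))]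
  calc |s/2|^(2*k+n) / ((k ! : ℝ) * ((k+n)! : ℝ))
      ≤ |s/2|^(2*k+n) / ((k ! : ℝ) * 1) := by
        gcongr
    _ = |s/2|^n * ((|s/2|^2)^k / (k ! : ℝ)) := by
        rw [mul_one, ← pow_mul, pow_add]; ring
    _ = |s/2|^n * (((s/2)^2)^k / (k ! : ℝ)) := by rw [sq_abs]

lemma fact_ne (k : ℕ) : ((k ! : ℕ) : ℝ) ≠ 0 := by positivity

lemma summable_s0 (s : ℝ) : Summable (fun k : ℕ => (2/((k ! : ℝ)*(k ! : ℝ))) * (s/2)^(2*k+1)) := by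
  refine summable_bound _ 2 0 (s/2) (by norm_num) le_rfl (fun k => ?_)
  rw [abs_div, abs_of_pos (by positivity : (0:ℝ) < (k ! : ℝ)*(k ! : ℝ))]
  simp [sq]

lemma summable_s1 (γ₀ s : ℝ) :
    Summable (fun k : ℕ => (γ₀/((k ! : ℝ)*((k+1)! : ℝ))) * (s/2)^(2*k+1)) := by
  refine summable_bound _ |γ₀| 0 (s/2) (abs_nonneg _) le_rfl (fun k => ?_)
  rw [abs_div, abs_of_pos (by positivity : (0:ℝ) < (k ! : ℝ)*((k+1)! : ℝ)), sq]
  have hle : (k ! : ℝ) ≤ ((k+1)! : ℝ) := by exact_mod_cast Nat.factorial_le (Nat.le_succ k)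
  have h2 : |γ₀| ≤ |γ₀| + 0 * (k:ℝ) := by simp
  gcongr

lemma repr_eq (β₀ γ₀ s : ℝ) :
    s * besselI 0 s - (γ₀ + β₀ * s ^ 2) * besselI 1 s
      = ∑' j : ℕ, dj β₀ γ₀ j * (s/2)^(2*j+1) := by
  have h0 : s * besselI 0 s = ∑' k : ℕ, (2/((k ! : ℝ)*(k ! : ℝ))) * (s/2)^(2*k+1) := by
    rw [besselI, ← tsum_mul_left]
    refine tsum_congr fun k => ?_
    simp only [Nat.add_zero]
    have hk := fact_ne k
    field_simp
    ring
  have h1 : γ₀ * besselI 1 s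
      = ∑' k : ℕ, (γ₀/((k ! : ℝ)*((k+1)! : ℝ))) * (s/2)^(2*k+1) := by
    rw [besselI, ← tsum_mul_left]
    exact tsum_congr fun k => by ring
  have h2 : (β₀ * s ^ 2) * besselI 1 s
      = ∑' j : ℕ, (4*β₀*j/((j ! : ℝ))^2) * (s/2)^(2*j+1) := by
    rw [besselI, ← tsum_mul_left]
    rw [Summable.tsum_eq_zero_add (ej_summable β₀ (s/2))]
    rw [show (4*β₀*(0:ℕ)/(((0:ℕ) ! : ℝ))^2) * (s/2)^(2*0+1) = 0 by norm_num, zero_add]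
    refine (tsum_congr fun k => ?_).symm
    have hk := fact_ne k
    have hk1 : ((k:ℝ)+1) ≠ 0 := by positivity
    push_cast [Nat.factorial_succ]
    field_simp
    ring
  have hsplit : (γ₀ + β₀ * s ^ 2) * besselI 1 s
      = γ₀ * besselI 1 s + (β₀ * s ^ 2) * besselI 1 s := by ring
  rw [hsplit, h0, h1, h2]
  rw [← Summable.tsum_add (summable_s1 γ₀ s) (ej_summable β₀ (s/2)),
    ← Summable.tsum_sub (summable_s0 s) ((summable_s1 γ₀ s).add (ej_summable β₀ (s/2)))]
  refine tsum_congr fun k => ?_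
  have hk := fact_ne k
  have hk1 : ((k:ℝ)+1) ≠ 0 := by positivity
  rw [dj]
  push_cast [Nat.factorial_succ]
  field_simp
  ring


def cseq (β₀ γ₀ : ℝ) (n : ℕ) : ℝ := if n % 2 = 1 then dj β₀ γ₀ (n/2) / 2^n else 0

lemma cseq_odd (β₀ γ₀ : ℝ) (j : ℕ) :
    cseq β₀ γ₀ (2*j+1) = dj β₀ γ₀ j / 2^(2*j+1) := by
  have h1 : (2*j+1) % 2 = 1 := by omega
  have h2 : (2*j+1) / 2 = j := by omega
  simp [cseq, h1, h2]

lemma odd_inj : Function.Injective (fun j : ℕ => 2*j+1) := fun a b h => by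
  simp only at h; omega

lemma sum_eq (β₀ γ₀ s : ℝ) :
    (FormalMultilinearSeries.ofScalars ℝ (cseq β₀ γ₀)).sum s
      = ∑' j : ℕ, dj β₀ γ₀ j * (s/2)^(2*j+1) := by
  have h1 : (FormalMultilinearSeries.ofScalars ℝ (cseq β₀ γ₀)).sum s
      = ∑' n : ℕ, cseq β₀ γ₀ n • s^n :=
    FormalMultilinearSeries.ofScalars_sum_eq (cseq β₀ γ₀) s
  rw [h1]
  rw [← Function.Injective.tsum_eq (f := fun n => cseq β₀ γ₀ n • s^n) odd_inj ?_]
  · refine tsum_congr fun j => ?_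
    rw [cseq_odd, smul_eq_mul, div_pow]
    ring
  · intro n hn
    rcases Nat.even_or_odd n with he | ho
    · exfalso
      rw [Nat.even_iff] at he
      have h2 : n % 2 ≠ 1 := by omega
      apply hn
      simp [cseq, h2]
    · obtain ⟨m, hm⟩ := ho
      refine Set.mem_range.mpr ⟨m, ?_⟩
      omega

lemma radius_top (β₀ γ₀ : ℝ) :
    (FormalMultilinearSeries.ofScalars ℝ (cseq β₀ γ₀)).radius = ⊤ := by
  rw [eq_top_iff]
  refine ENNReal.le_of_forall_nnreal_lt fun r _ => ?_
  apply FormalMultilinearSeries.le_radius_of_summable_norm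
  simp_rw [FormalMultilinearSeries.ofScalars_norm]
  rw [← Function.Injective.summable_iff odd_inj ?_]
  · have heq : ((fun n => ‖cseq β₀ γ₀ n‖ * (r:ℝ)^n) ∘ (fun j : ℕ => 2*j+1))
        = fun j => |dj β₀ γ₀ j| * ((r:ℝ)/2)^(2*j+1) := by
      funext j
      simp only [Function.comp_apply]
      rw [cseq_odd, Real.norm_eq_abs, abs_div,
        abs_of_pos (by positivity : (0:ℝ) < (2:ℝ)^(2*j+1)), div_pow]
      ring
    rw [heq]
    refine summable_bound _ (2 + |γ₀|) (4*|β₀|) _ (by positivity) (by positivity) (fun j => ?_)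
    rw [abs_abs]
    exact abs_dj_le β₀ γ₀ j
  · intro n hn
    have h2 : n % 2 ≠ 1 := by
      intro h
      exact hn ⟨n/2, show 2*(n/2)+1 = n by omega⟩
    simp [cseq, h2]

lemma analyticF (β₀ γ₀ : ℝ) :
    AnalyticOnNhd ℝ (fun s : ℝ => ∑' j : ℕ, dj β₀ γ₀ j * (s/2)^(2*j+1)) univ := by
  intro x _
  have hrad : (0:ENNReal) < (FormalMultilinearSeries.ofScalars ℝ (cseq β₀ γ₀)).radius := by
    rw [radius_top]; exact ENNReal.zero_lt_top
  have h := (FormalMultilinearSeries.ofScalars ℝ (cseq β₀ γ₀)).hasFPowerSeriesOnBall hrad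
  have hF : (fun s : ℝ => ∑' j : ℕ, dj β₀ γ₀ j * (s/2)^(2*j+1))
      = (FormalMultilinearSeries.ofScalars ℝ (cseq β₀ γ₀)).sum :=
    funext fun s => (sum_eq β₀ γ₀ s).symm
  rw [hF]
  refine h.analyticAt_of_mem ?_
  rw [radius_top, EMetric.mem_ball]
  exact edist_lt_top x 0


lemma neg_at_large (β₀ γ₀ : ℝ) (hβ₀ : 0 < β₀) :
    ∃ M : ℝ, ∀ s, M ≤ s → (∑' j : ℕ, dj β₀ γ₀ j * (s/2)^(2*j+1)) < 0 := by
  set J : ℕ := max 1 ⌈(3+|γ₀|)/(4*β₀)⌉₊ with hJdef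
  have hJ1 : 1 ≤ J := le_max_left _ _
  have hJge : 3 + |γ₀| ≤ 4*β₀*J := by
    have h1 : (3+|γ₀|)/(4*β₀) ≤ (⌈(3+|γ₀|)/(4*β₀)⌉₊ : ℝ) := Nat.le_ceil _
    have h2 : (⌈(3+|γ₀|)/(4*β₀)⌉₊ : ℝ) ≤ (J:ℝ) := by
      exact_mod_cast le_max_right 1 ⌈(3+|γ₀|)/(4*β₀)⌉₊
    rw [div_le_iff₀ (by positivity)] at h1
    nlinarith
  have hdneg : ∀ j, J ≤ j → dj β₀ γ₀ j ≤ -1 / ((j ! : ℝ))^2 := by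
    intro j hj
    have hcast : (J:ℝ) ≤ (j:ℝ) := by exact_mod_cast hj
    have hj1 : (0:ℝ) < (j:ℝ)+1 := by positivity
    have habs : -(γ₀/((j:ℝ)+1)) ≤ |γ₀| := by
      have h1 : -(γ₀/((j:ℝ)+1)) ≤ |γ₀/((j:ℝ)+1)| := neg_le_abs _
      have h2 : |γ₀/((j:ℝ)+1)| = |γ₀|/((j:ℝ)+1) := by
        rw [abs_div, abs_of_pos hj1]
      rw [h2] at h1
      exact h1.trans (div_le_self (abs_nonneg _) (by linarith [Nat.cast_nonneg (α := ℝ) j]))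
    have hnum : 2 - 4*β₀*(j:ℝ) - γ₀/((j:ℝ)+1) ≤ -1 := by nlinarith
    rw [dj]
    have hpos : (0:ℝ) < ((j ! : ℝ))^2 := by positivity
    exact div_le_div_of_nonneg_right hnum hpos.le |>.trans_eq (by ring)
  set C : ℝ := ∑ j ∈ Finset.range J, |dj β₀ γ₀ j| with hCdef
  have hC : 0 ≤ C := Finset.sum_nonneg fun _ _ => abs_nonneg _
  have hJfac : (0:ℝ) < ((J ! : ℝ))^2 := by positivity
  refine ⟨max 2 (2*(C*((J ! : ℝ))^2+1)), fun s hs => ?_⟩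
  set u := s/2 with hu
  have hu1 : 1 ≤ u := by
    have := (le_max_left 2 (2*(C*((J ! : ℝ))^2+1))).trans hs
    rw [hu]; linarith
  have hupos : 0 < u := by linarith
  have hu2 : C*((J ! : ℝ))^2+1 ≤ u := by
    have := (le_max_right 2 (2*(C*((J ! : ℝ))^2+1))).trans hs
    rw [hu]; linarith
  have hsum := summable_dj β₀ γ₀ u
  have hle1 : (∑' j : ℕ, dj β₀ γ₀ j * u^(2*j+1))
      ≤ ∑ j ∈ Finset.range (J+1), dj β₀ γ₀ j * u^(2*j+1) := by
    have hneg := Summable.sum_le_tsum (Finset.range (J+1))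
      (f := fun j => -(dj β₀ γ₀ j * u^(2*j+1))) ?_ hsum.neg
    · rw [tsum_neg, Finset.sum_neg_distrib] at hneg
      linarith
    · intro j hj
      have hjJ : J ≤ j := by
        simp only [Finset.mem_range, not_lt] at hj; omega
      have hd0 : dj β₀ γ₀ j ≤ 0 := by
        refine (hdneg j hjJ).trans ?_
        have : (0:ℝ) < ((j ! : ℝ))^2 := by positivity
        exact le_of_lt (div_neg_of_neg_of_pos (by norm_num) this)
      exact neg_nonneg.mpr (mul_nonpos_of_nonpos_of_nonneg hd0 (by positivity))
  have hsplit : ∑ j ∈ Finset.range (J+1), dj β₀ γ₀ j * u^(2*j+1)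
      = (∑ j ∈ Finset.range J, dj β₀ γ₀ j * u^(2*j+1)) + dj β₀ γ₀ J * u^(2*J+1) :=
    Finset.sum_range_succ _ _
  have hhead : ∑ j ∈ Finset.range J, dj β₀ γ₀ j * u^(2*j+1) ≤ C * u^(2*J-1) := by
    calc ∑ j ∈ Finset.range J, dj β₀ γ₀ j * u^(2*j+1)
        ≤ ∑ j ∈ Finset.range J, |dj β₀ γ₀ j| * u^(2*J-1) := by
          refine Finset.sum_le_sum fun j hj => ?_
          have hjlt : j < J := Finset.mem_range.mp hj
          have h1 : dj β₀ γ₀ j * u^(2*j+1) ≤ |dj β₀ γ₀ j| * u^(2*j+1) :=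
            mul_le_mul_of_nonneg_right (le_abs_self _) (by positivity)
          have h2 : u^(2*j+1) ≤ u^(2*J-1) := pow_le_pow_right₀ hu1 (by omega)
          exact h1.trans (mul_le_mul_of_nonneg_left h2 (abs_nonneg _))
      _ = C * u^(2*J-1) := by rw [hCdef, Finset.sum_mul]
  have htail : dj β₀ γ₀ J * u^(2*J+1) ≤ -1/((J ! : ℝ))^2 * u^(2*J+1) :=
    mul_le_mul_of_nonneg_right (hdneg J le_rfl) (by positivity)
  have hfinal : C * u^(2*J-1) + (-1/((J ! : ℝ))^2) * u^(2*J+1) < 0 := by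
    set v := u^(2*J-1) with hv
    have hvpos : 0 < v := pow_pos hupos _
    have hrw : u^(2*J+1) = v * u^2 := by
      rw [hv, ← pow_add]
      congr 1
      omega
    rw [hrw]
    have key : C * ((J ! : ℝ))^2 - u^2 < 0 := by nlinarith
    have heq : C*v + (-1/((J ! : ℝ))^2)*(v*u^2)
        = v * (C*((J ! : ℝ))^2 - u^2) / ((J ! : ℝ))^2 := by
      field_simp
      ring
    rw [heq]
    exact div_neg_of_neg_of_pos (mul_neg_of_pos_of_neg hvpos key) hJfac
  linarith

lemma F_odd (β₀ γ₀ s : ℝ) :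
    ∑' j : ℕ, dj β₀ γ₀ j * ((-s)/2)^(2*j+1)
      = -∑' j : ℕ, dj β₀ γ₀ j * (s/2)^(2*j+1) := by
  rw [← tsum_neg]
  refine tsum_congr fun j => ?_
  have h1 : ((-s)/2) = -(s/2) := by ring
  rw [h1, Odd.neg_pow ⟨j, by omega⟩]
  ring

end DispersionAux

/-- For all `β₀ > 0` and `γ₀ ∈ ℝ` the set of real solutions of
`s I₀(s) = (γ₀ + β₀ s²) I₁(s)` is finite (so the linearised operator `K` has only
finitely many purely imaginary eigenvalues). -/
theorem dispersion_solutions_finite (β₀ γ₀ : ℝ) (hβ₀ : 0 < β₀) :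
    {s : ℝ | s * besselI 0 s = (γ₀ + β₀ * s ^ 2) * besselI 1 s}.Finite := by
  classical
  set F : ℝ → ℝ := fun s => ∑' j : ℕ, DispersionAux.dj β₀ γ₀ j * (s/2)^(2*j+1) with hFdef
  set Z : Set ℝ := {s : ℝ | s * besselI 0 s = (γ₀ + β₀ * s ^ 2) * besselI 1 s} with hZdef
  have hFzero : ∀ s ∈ Z, F s = 0 := by
    intro s hs
    have h := DispersionAux.repr_eq β₀ γ₀ s
    rw [hFdef]
    simp only
    rw [← h]
    exact sub_eq_zero_of_eq hs
  obtain ⟨M, hM⟩ := DispersionAux.neg_at_large β₀ γ₀ hβ₀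
  set M' : ℝ := max M 1 with hM'def
  have hM'M : M ≤ M' := le_max_left _ _
  have hbound : Z ⊆ Icc (-M') M' := by
    intro s hs
    by_contra hsn
    simp only [mem_Icc, not_and_or, not_le] at hsn
    have hFs := hFzero s hs
    rcases hsn with h1 | h2
    · have hneg : F (-s) < 0 := hM (-s) (by linarith)
      have hodd : F (-s) = -F s := DispersionAux.F_odd β₀ γ₀ s
      rw [hodd, hFs] at hneg
      norm_num at hneg
    · have hneg : F s < 0 := hM s (by linarith)
      rw [hFs] at hneg
      norm_num at hneg
  by_contra hfin
  have hZinf : Z.Infinite := hfin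
  let e := hZinf.natEmbedding
  set x : ℕ → ℝ := fun n => ((e n : Z) : ℝ) with hxdef
  have hxZ : ∀ n, x n ∈ Z := fun n => (e n).2
  have hxI : Function.Injective x := fun a b hab => e.injective (Subtype.ext hab)
  have hxIcc : ∀ n, x n ∈ Icc (-M') M' := fun n => hbound (hxZ n)
  obtain ⟨x₀, hx₀mem, ψ, hψ, hconv⟩ := (isCompact_Icc).tendsto_subseq hxIcc
  have hsub : {n : ℕ | x (ψ n) = x₀}.Subsingleton := by
    intro a ha b hb
    exact hψ.injective (hxI (ha.trans hb.symm))
  have hev : ∀ᶠ n in atTop, x (ψ n) ≠ x₀ := by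
    have hfin2 : {n : ℕ | x (ψ n) = x₀}.Finite := hsub.finite
    have := hfin2.eventually_cofinite_notMem
    rwa [Nat.cofinite_eq_atTop] at this
  have htendsto : Tendsto (fun n => x (ψ n)) atTop (𝓝[≠] x₀) :=
    tendsto_nhdsWithin_of_tendsto_nhds_of_eventually_within _ hconv
      (hev.mono fun n h => h)
  have hfreq : ∃ᶠ z in 𝓝[≠] x₀, F z = 0 :=
    htendsto.frequently (Frequently.of_forall fun n => hFzero (x (ψ n)) (hxZ (ψ n)))
  have hall := (DispersionAux.analyticF β₀ γ₀).eqOn_zero_of_preconnected_of_frequently_eq_zero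
    isPreconnected_univ (mem_univ x₀) hfreq
  have hcontr : F (M'+1) = 0 := hall (mem_univ (M'+1))
  have : F (M'+1) < 0 := hM (M'+1) (by linarith)
  rw [hcontr] at this
  norm_num at this
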